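/- Let Σ_p be an n×n Hermitian positive definite complex matrix, Σ_m an m×m Hermitian positive definite complex matrix, and C an m×n complex matrix. For an n×m complex matrix K define J(K) = Σ_p + K (Σ_m + C Σ_p C*) K* − K C Σ_p − Σ_p C* K*. Then K* := Σ_p C* (C Σ_p C* + Σ_m)⁻¹ minimizes the trace of J: for every n×m complex matrix K, tr(J(K)) ≥ tr(J(K*)), with tr(J(K)) real for all K since J(K) is Hermitian. -/

import Mathlib

open Matrix
open scoped ComplexOrder

lemma posSemidef_trace_nonneg {n : ℕ} {A : Matrix (Fin n) (Fin n) ℂ}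
    (hA : A.PosSemidef) : 0 ≤ A.trace := by
  rw [Matrix.trace]
  apply Finset.sum_nonneg
  intro i _
  exact hA.diag_nonneg

/-- Optimality of the Kalman-type gain. For `Sp` (= Σ_prior)
Hermitian positive definite, `Sm` (= Σ_meas) Hermitian positive definite and
`C` an `m×n` complex matrix, define the posterior covariance
`J(K) = Sp + K (Sm + C Sp C*) K* − K C Sp − Sp C* K*`.  Then the gain
`K* = Sp C* (C Sp C* + Sm)⁻¹` minimizes the trace of `J`:
`tr(J(K)) ≥ tr(J(K*))` for every `n×m` matrix `K` (all traces are real since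
`J(K)` is Hermitian; the inequality is in the standard partial order on `ℂ`). -/
theorem optimal_gain_minimizes_trace
    {n m : ℕ} (Sp : Matrix (Fin n) (Fin n) ℂ) (hSp : Sp.PosDef)
    (Sm : Matrix (Fin m) (Fin m) ℂ) (hSm : Sm.PosDef)
    (C : Matrix (Fin m) (Fin n) ℂ)
    (J : Matrix (Fin n) (Fin m) ℂ → Matrix (Fin n) (Fin n) ℂ)
    (hJ : ∀ K, J K = Sp + K * (Sm + C * Sp * Cᴴ) * Kᴴ - K * (C * Sp) - Sp * Cᴴ * Kᴴ) :
    ∀ K : Matrix (Fin n) (Fin m) ℂ,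
      (J (Sp * Cᴴ * (C * Sp * Cᴴ + Sm)⁻¹)).trace ≤ (J K).trace := by
  intro K
  set S : Matrix (Fin m) (Fin m) ℂ := Sm + C * Sp * Cᴴ with hS
  have hSpd : S.PosDef := hSm.add_posSemidef (hSp.posSemidef.mul_mul_conjTranspose_same C)
  have hSinv : Invertible S := hSpd.isUnit.invertible
  set K₀ : Matrix (Fin n) (Fin m) ℂ := Sp * Cᴴ * (C * Sp * Cᴴ + Sm)⁻¹ with hK₀
  have hK₀' : K₀ = Sp * Cᴴ * S⁻¹ := by rw [hK₀, hS, add_comm]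
  have hK₀S : K₀ * S = Sp * Cᴴ := by
    rw [hK₀', Matrix.mul_assoc, Matrix.inv_mul_of_invertible, Matrix.mul_one]
  have hSherm : Sᴴ = S := hSpd.isHermitian
  have hSK₀ : S * K₀ᴴ = C * Sp := by
    calc S * K₀ᴴ = Sᴴ * K₀ᴴ := by rw [hSherm]
    _ = (K₀ * S)ᴴ := (Matrix.conjTranspose_mul _ _).symm
    _ = (Sp * Cᴴ)ᴴ := by rw [hK₀S]
    _ = C * Sp := by
        rw [Matrix.conjTranspose_mul, Matrix.conjTranspose_conjTranspose, hSp.isHermitian.eq]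
  have key : ∀ L : Matrix (Fin n) (Fin m) ℂ,
      J L = Sp - K₀ * S * K₀ᴴ + (L - K₀) * S * (L - K₀)ᴴ := by
    intro L
    rw [hJ L]
    have expand : (L - K₀) * S * (L - K₀)ᴴ
        = L * S * Lᴴ - L * S * K₀ᴴ - K₀ * S * Lᴴ + K₀ * S * K₀ᴴ := by
      rw [Matrix.conjTranspose_sub, Matrix.sub_mul, Matrix.mul_sub, Matrix.sub_mul, Matrix.sub_mul]
      abel
    have h1 : L * (C * Sp) = L * S * K₀ᴴ := by rw [Matrix.mul_assoc, hSK₀]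
    have h2 : Sp * Cᴴ * Lᴴ = K₀ * S * Lᴴ := by rw [← hK₀S]
    rw [expand, h1, h2]
    abel
  rw [key K, key K₀]
  simp only [sub_self, Matrix.zero_mul, Matrix.mul_zero, add_zero]
  have hps : ((K - K₀) * S * (K - K₀)ᴴ).PosSemidef :=
    hSpd.posSemidef.mul_mul_conjTranspose_same (K - K₀)
  have := posSemidef_trace_nonneg hps
  rw [Matrix.trace_add]
  exact le_add_of_nonneg_right this
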